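/- Let $b\in(1/2,1)$ be real. Then $\lim_{q\to 0^+} q^{2-2b}\,K_b(q) = \Gamma(2-2b)$, where $\Gamma$ is the Gamma function. -/

import Mathlib

open Filter MeasureTheory Set Real

/-- `K b q = ∑_{l=1}^∞ e^{-lq} l^{1-2b}`. -/
noncomputable def K (b q : ℝ) : ℝ :=
  ∑' l : ℕ, Real.exp (-((l : ℝ) + 1) * q) * ((l : ℝ) + 1) ^ (1 - 2 * b)

open intervalIntegral in
private lemma integral_Ioc_rpow_aux {s q : ℝ} (hs : 0 < s) (hq : 0 < q) :
    (∫ x in Set.Ioc (0:ℝ) q, x ^ (s - 1)) = q ^ s / s := by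
  rw [← integral_of_le hq.le, integral_rpow (Or.inl (by linarith))]
  have hss : s - 1 + 1 = s := by ring
  rw [hss, Real.zero_rpow hs.ne']
  ring

theorem limit_rpow_mul_K (b : ℝ) (hb : b ∈ Ioo (1/2 : ℝ) 1) :
    Tendsto (fun q : ℝ => q ^ (2 - 2 * b) * K b q) (nhdsWithin 0 (Ioi 0))
      (nhds (Real.Gamma (2 - 2 * b))) := by
  obtain ⟨hb1, hb2⟩ := hb
  set s : ℝ := 2 - 2 * b with hs_def
  have hs0 : 0 < s := by simp only [hs_def]; linarith
  have hs1 : s < 1 := by simp only [hs_def]; linarith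
  set f : ℝ → ℝ := fun x => Real.exp (-x) * x ^ (s - 1) with hf_def
  have hInt : IntegrableOn f (Ioi 0) := Real.GammaIntegral_convergent hs0
  have hGamma : Real.Gamma s = ∫ x in Ioi 0, f x := Real.Gamma_eq_integral hs0
  have hf_nonneg : ∀ x : ℝ, 0 ≤ x → 0 ≤ f x := fun x hx =>
    mul_nonneg (Real.exp_pos _).le (Real.rpow_nonneg hx _)
  have hf_anti : ∀ x y : ℝ, 0 < x → x ≤ y → f y ≤ f x := by
    intro x y hx hxy
    exact mul_le_mul (Real.exp_le_exp.2 (neg_le_neg hxy))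
      (Real.rpow_le_rpow_of_nonpos hx hxy (by linarith))
      (Real.rpow_nonneg (by linarith) _) (Real.exp_pos _).le
  have key : ∀ q : ℝ, 0 < q →
      Real.Gamma s - q ^ s / s ≤ q ^ s * K b q ∧ q ^ s * K b q ≤ Real.Gamma s := by
    intro q hq
    set A : ℕ → ℝ := fun l => q * f (((l:ℝ) + 1) * q) with hA_def
    have hterm_nonneg : ∀ l : ℕ,
        0 ≤ Real.exp (-((l:ℝ) + 1) * q) * ((l:ℝ) + 1) ^ (s - 1) := fun l =>
      mul_nonneg (Real.exp_pos _).le (Real.rpow_nonneg (by positivity) _)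
    have hsumm : Summable (fun l : ℕ =>
        Real.exp (-((l:ℝ) + 1) * q) * ((l:ℝ) + 1) ^ (s - 1)) := by
      have hgeo : Summable (fun l : ℕ => Real.exp (-q) ^ (l + 1)) :=
        (summable_geometric_of_lt_one (Real.exp_pos _).le
          (Real.exp_lt_one_iff.2 (by linarith))).comp_injective (add_left_injective 1)
      refine Summable.of_nonneg_of_le hterm_nonneg (fun l => ?_) hgeo
      have h1 : ((l:ℝ) + 1) ^ (s - 1) ≤ 1 :=
        Real.rpow_le_one_of_one_le_of_nonpos (by simp) (by linarith)
      calc Real.exp (-((l:ℝ) + 1) * q) * ((l:ℝ) + 1) ^ (s - 1)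
          ≤ Real.exp (-((l:ℝ) + 1) * q) * 1 :=
            mul_le_mul_of_nonneg_left h1 (Real.exp_pos _).le
        _ = Real.exp (-q) ^ (l + 1) := by
            rw [mul_one, ← Real.exp_nat_mul]; congr 1; push_cast; ring
    have hA_eq : ∀ l : ℕ, A l
        = q ^ s * (Real.exp (-((l:ℝ) + 1) * q) * ((l:ℝ) + 1) ^ (s - 1)) := by
      intro l
      have hlq : (0:ℝ) ≤ (l:ℝ) + 1 := by positivity
      simp only [hA_def, hf_def]
      rw [Real.mul_rpow hlq hq.le]
      have h2 : q * (Real.exp (-(((l:ℝ) + 1) * q)) * (((l:ℝ)+1) ^ (s-1) * q ^ (s-1)))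
          = (q * q ^ (s-1)) * (Real.exp (-(((l:ℝ) + 1) * q)) * ((l:ℝ)+1) ^ (s-1)) := by ring
      rw [h2, ← Real.rpow_one_add' hq.le (by intro h; linarith)]
      ring_nf
    have hA_summ : Summable A :=
      (hsumm.mul_left (q ^ s)).congr fun l => (hA_eq l).symm
    have hKq : q ^ s * K b q = ∑' l : ℕ, A l := by
      have hK : K b q = ∑' l : ℕ, Real.exp (-((l:ℝ) + 1) * q) * ((l:ℝ) + 1) ^ (s - 1) := by
        have he : s - 1 = 1 - 2 * b := by rw [hs_def]; ring
        rw [he]; rfl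
      rw [hK, ← tsum_mul_left]
      exact tsum_congr fun l => (hA_eq l).symm
    -- intervals
    set I : ℕ → ℝ := fun l => ∫ x in Ioc ((l:ℝ)*q) (((l:ℝ)+1)*q), f x with hI_def
    have hUnion : (⋃ l : ℕ, Ioc ((l:ℝ)*q) (((l:ℝ)+1)*q)) = Ioi 0 := by
      ext x
      simp only [mem_iUnion, mem_Ioc, mem_Ioi]
      constructor
      · rintro ⟨l, h1, h2⟩
        have : (0:ℝ) ≤ (l:ℝ)*q := by positivity
        linarith
      · intro hx
        set n := ⌈x/q⌉₊ with hn_def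
        have hxq : 0 < x / q := div_pos hx hq
        have hn1 : 1 ≤ n := Nat.one_le_ceil_iff.2 hxq
        refine ⟨n - 1, ?_, ?_⟩
        · have h2 : (n:ℝ) < x / q + 1 := Nat.ceil_lt_add_one hxq.le
          have hcast : ((n - 1 : ℕ) : ℝ) = (n:ℝ) - 1 := by
            push_cast [Nat.cast_sub hn1]; ring
          rw [hcast]
          have : (n:ℝ) - 1 < x / q := by linarith
          calc ((n:ℝ) - 1) * q < (x / q) * q := by
                exact mul_lt_mul_of_pos_right this hq
            _ = x := div_mul_cancel₀ x hq.ne'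
        · have hcast : ((n - 1 : ℕ) : ℝ) + 1 = (n:ℝ) := by
            push_cast [Nat.cast_sub hn1]; ring
          rw [hcast]
          have h3 : x / q ≤ (n:ℝ) := Nat.le_ceil _
          calc x = (x / q) * q := (div_mul_cancel₀ x hq.ne').symm
            _ ≤ (n:ℝ) * q := mul_le_mul_of_nonneg_right h3 hq.le
    have hdisj : Pairwise (Function.onFun Disjoint fun l : ℕ => Ioc ((l:ℝ)*q) (((l:ℝ)+1)*q)) := by
      have hmono : Monotone (fun l : ℕ => (l:ℝ) * q) := fun a c hac =>
        mul_le_mul_of_nonneg_right (Nat.cast_le.2 hac) hq.le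
      have h := hmono.pairwise_disjoint_on_Ioc_succ
      convert h using 3 with l
      simp [Order.succ_eq_add_one]
    have hHasSum : HasSum I (Real.Gamma s) := by
      have h := MeasureTheory.hasSum_integral_iUnion
        (μ := volume) (f := f) (s := fun l : ℕ => Ioc ((l:ℝ)*q) (((l:ℝ)+1)*q))
        (fun l => measurableSet_Ioc) hdisj (by rw [hUnion]; exact hInt)
      rw [hUnion, ← hGamma] at h
      exact h
    have hI_summ : Summable I := hHasSum.summable
    have htsumI : ∑' l, I l = Real.Gamma s := hHasSum.tsum_eq
    have hsub : ∀ l : ℕ, Ioc ((l:ℝ)*q) (((l:ℝ)+1)*q) ⊆ Ioi 0 := by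
      intro l x hx
      have : (0:ℝ) ≤ (l:ℝ)*q := by positivity
      exact lt_of_le_of_lt this hx.1
    have hIntl : ∀ l : ℕ, IntegrableOn f (Ioc ((l:ℝ)*q) (((l:ℝ)+1)*q)) := fun l =>
      hInt.mono_set (hsub l)
    have hvol : ∀ l : ℕ, (volume (Ioc ((l:ℝ)*q) (((l:ℝ)+1)*q))).toReal = q := by
      intro l
      rw [Real.volume_Ioc, ENNReal.toReal_ofReal (by nlinarith)]
      ring
    have hposl : ∀ l : ℕ, (0:ℝ) < ((l:ℝ)+1)*q := fun l => by positivity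
    have hub : ∀ l : ℕ, A l ≤ I l := by
      intro l
      have h1 : A l = ∫ _ in Ioc ((l:ℝ)*q) (((l:ℝ)+1)*q), f (((l:ℝ)+1)*q) := by
        rw [setIntegral_const, measureReal_def, hvol l, smul_eq_mul, hA_def]
      rw [h1]
      refine setIntegral_mono_on
        (integrableOn_const measure_Ioc_lt_top.ne) (hIntl l)
        measurableSet_Ioc fun x hx => ?_
      exact hf_anti x (((l:ℝ)+1)*q) (hsub l hx) hx.2
    have hlb : ∀ l : ℕ, I (l + 1) ≤ A l := by
      intro l
      have hcast : ((l + 1 : ℕ) : ℝ) = (l:ℝ) + 1 := by push_cast; ring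
      have h1 : A l = ∫ _ in Ioc (((l:ℝ)+1)*q) (((l:ℝ)+1+1)*q), f (((l:ℝ)+1)*q) := by
        rw [setIntegral_const, measureReal_def, Real.volume_Ioc, ENNReal.toReal_ofReal (by nlinarith),
          smul_eq_mul, hA_def]
        ring_nf
      have h2 : I (l + 1) = ∫ x in Ioc (((l:ℝ)+1)*q) (((l:ℝ)+1+1)*q), f x := by
        simp only [hI_def, hcast]
      rw [h1, h2]
      refine setIntegral_mono_on (hInt.mono_set ?_)
        (integrableOn_const measure_Ioc_lt_top.ne)
        measurableSet_Ioc fun x hx => ?_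
      · intro x hx
        exact lt_of_le_of_lt (by positivity) hx.1
      · exact hf_anti (((l:ℝ)+1)*q) x (hposl l) hx.1.le
    have hI0 : I 0 ≤ q ^ s / s := by
      have h0 : I 0 = ∫ x in Ioc (0:ℝ) q, f x := by
        simp only [hI_def]; norm_num
      have h1 : (∫ x in Ioc (0:ℝ) q, f x) ≤ ∫ x in Ioc (0:ℝ) q, x ^ (s - 1) := by
        refine setIntegral_mono_on (by simpa using hIntl 0)
          ((intervalIntegrable_iff_integrableOn_Ioc_of_le hq.le).1
            (_root_.intervalIntegral.intervalIntegrable_rpow' (by linarith)))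
          measurableSet_Ioc fun x hx => ?_
        simp only [hf_def]
        calc Real.exp (-x) * x ^ (s - 1) ≤ 1 * x ^ (s - 1) :=
              mul_le_mul_of_nonneg_right (Real.exp_le_one_iff.2 (by linarith [hx.1]))
                (Real.rpow_nonneg hx.1.le _)
          _ = x ^ (s - 1) := one_mul _
      have h2 : (∫ x in Ioc (0:ℝ) q, x ^ (s - 1)) = q ^ s / s :=
        integral_Ioc_rpow_aux hs0 hq
      rw [h0]
      linarith
    constructor
    · have hshift : Summable (fun l : ℕ => I (l + 1)) :=
        hI_summ.comp_injective (add_left_injective 1)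
      have h2 : ∑' l, I (l + 1) ≤ ∑' l, A l := Summable.tsum_le_tsum hlb hshift hA_summ
      have h3 : ∑' l, I l = I 0 + ∑' l, I (l + 1) := Summable.tsum_eq_zero_add hI_summ
      rw [hKq]
      have := htsumI
      linarith [h3 ▸ htsumI]
    · rw [hKq, ← htsumI]
      exact Summable.tsum_le_tsum hub hA_summ hI_summ
  have hlow : Tendsto (fun q : ℝ => Real.Gamma s - q ^ s / s)
      (nhdsWithin 0 (Ioi 0)) (nhds (Real.Gamma s)) := by
    have h0 : Tendsto (fun q : ℝ => q ^ s) (nhdsWithin 0 (Ioi 0)) (nhds 0) := by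
      have h := (Real.continuousAt_rpow_const 0 s (Or.inr hs0.le)).tendsto
      rw [Real.zero_rpow hs0.ne'] at h
      exact h.mono_left nhdsWithin_le_nhds
    have h := (tendsto_const_nhds (x := Real.Gamma s)
      (f := nhdsWithin (0:ℝ) (Ioi 0))).sub (h0.div_const s)
    simpa using h
  exact tendsto_of_tendsto_of_tendsto_of_le_of_le' hlow tendsto_const_nhds
    (eventually_nhdsWithin_of_forall fun q hq => (key q hq).1)
    (eventually_nhdsWithin_of_forall fun q hq => (key q hq).2)
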